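/- Let d ≥ 1, let k_i, l_i be positive even integers for 1 ≤ i ≤ d, and assume min_i (k_i l_i − 1) > max_i max(k_i, l_i). Consider the recurrence x_{t+1,n} + x_{t−1,n} = Σ_{i=1}^d (a_i/x_{t,n+e_i}^{k_i} + b_i/x_{t,n−e_i}^{l_i}) over the field of Laurent series in ε, with generic initial data except x_{0,0} = ε. Then x_{2,0} = −ε + O(ε^M) with M = min_i (k_i l_i), i.e. the ε-order of x_{2,0} + ε is at least M. -/

import Mathlib

/-- Coefficient evaluation as an additive monoid hom. -/
def coeffHom {F : Type*} [Field F] (j : ℤ) : LaurentSeries F →+ F where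
  toFun y := y.coeff j
  map_zero' := rfl
  map_add' _ _ := rfl

lemma order_eq_of {F : Type*} [Field F] {y : LaurentSeries F} {m : ℤ}
    (h0 : ∀ j : ℤ, j < m → y.coeff j = 0) (hm : y.coeff m ≠ 0) : y.order = m := by
  have hy : y ≠ 0 := HahnSeries.ne_zero_of_coeff_ne_zero hm
  refine le_antisymm (HahnSeries.order_le_of_coeff_ne_zero hm) ?_
  by_contra hlt
  push_neg at hlt
  exact hy (HahnSeries.coeff_order_eq_zero.1 (h0 _ hlt))

lemma order_inv' {F : Type*} [Field F] {y : LaurentSeries F} (hy : y ≠ 0) :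
    (y⁻¹).order = -y.order := by
  have hinv : y⁻¹ ≠ 0 := inv_ne_zero hy
  have h1 : (y * y⁻¹).order = y.order + (y⁻¹).order :=
    HahnSeries.order_mul hy hinv
  rw [mul_inv_cancel₀ hy, HahnSeries.order_one] at h1
  linarith

/-- If `y = single (-L) c + r` with `c ≠ 0`, `0 < L`, and `r` supported in
nonnegative degrees, then `C a / y ^ K` has coefficients vanishing below `K * L`. -/
lemma key_term {F : Type*} [Field F] {y r : LaurentSeries F} {c a : F} {L K : ℕ}
    (hc : c ≠ 0) (hL : 0 < L) (hK : 0 < K)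
    (hy : y = HahnSeries.single (-(L : ℤ)) c + r)
    (hr : ∀ j : ℤ, j < 0 → r.coeff j = 0) :
    ∀ j : ℤ, j < (K : ℤ) * (L : ℤ) → (HahnSeries.C a / y ^ K).coeff j = 0 := by
  intro j hj
  have hLZ : (0 : ℤ) < (L : ℤ) := by exact_mod_cast hL
  -- order of y is -L
  have hyo : y.order = -(L : ℤ) := by
    apply order_eq_of
    · intro i hi
      have hi0 : i < 0 := by linarith
      rw [hy, HahnSeries.coeff_add, HahnSeries.coeff_single, hr i hi0]
      rw [if_neg (by omega)]
      simp
    · rw [hy, HahnSeries.coeff_add, HahnSeries.coeff_single, if_pos rfl,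
        hr _ (by linarith)]
      simpa using hc
  have hyne : y ≠ 0 := by
    intro h
    rw [h, HahnSeries.order_zero] at hyo
    omega
  have hpow : y ^ K ≠ 0 := pow_ne_zero _ hyne
  have hpowo : (y ^ K).order = K • (-(L : ℤ)) := by
    rw [HahnSeries.order_pow y K, hyo]
  have hinvo : ((y ^ K)⁻¹).order = (K : ℤ) * (L : ℤ) := by
    rw [order_inv' hpow, hpowo]
    simp [nsmul_eq_mul]
  rw [div_eq_mul_inv]
  rcases eq_or_ne a 0 with rfl | ha
  · simp
  have hCa : (HahnSeries.C a : LaurentSeries F) ≠ 0 := HahnSeries.C_ne_zero ha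
  have hinvne : (y ^ K)⁻¹ ≠ 0 := inv_ne_zero hpow
  have hordmul : (HahnSeries.C a * (y ^ K)⁻¹).order = (K : ℤ) * (L : ℤ) := by
    rw [HahnSeries.order_mul hCa hinvne, hinvo]
    have : (HahnSeries.C a : LaurentSeries F).order = 0 := by
      simpa using HahnSeries.order_single ha (a := (0 : ℤ))
    rw [this, zero_add]
  exact HahnSeries.coeff_eq_zero_of_lt_order (by rw [hordmul]; exact hj)

/-- singularity-confinement cancellation for the multi-dimensional
coprimeness-preserving discrete KdV equation. With `x_{0,0} = ε`,
`x_{1,e_i} = b_i ε^{−l_i} + O(1)`, `x_{1,−e_i} = a_i ε^{−k_i} + O(1)` and the recurrence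
`x_{2,0} + x_{0,0} = Σ_i (a_i/x_{1,e_i}^{k_i} + b_i/x_{1,−e_i}^{l_i})` over the field of
Laurent series, under the condition `min_i (k_i l_i − 1) > max_i max(k_i, l_i)` one has
`x_{2,0} = −ε + O(ε^M)` with `M = min_i (k_i l_i)`. -/
theorem stmt11 {F : Type*} [Field F] (d : ℕ) (hd : 1 ≤ d) (k l : Fin d → ℕ)
    (hk : ∀ i, Even (k i) ∧ 0 < k i) (hl : ∀ i, Even (l i) ∧ 0 < l i)
    (hcond : ∀ i j : Fin d, (max (k j) (l j) : ℤ) < (k i : ℤ) * (l i : ℤ) - 1)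
    (a b : Fin d → F) (ha : ∀ i, a i ≠ 0) (hb : ∀ i, b i ≠ 0)
    (x : ℤ → (Fin d → ℤ) → LaurentSeries F)
    (hx00 : x 0 0 = HahnSeries.single (1 : ℤ) (1 : F))
    (hx1p : ∀ i : Fin d, ∃ r : LaurentSeries F,
      x 1 (Pi.single i 1) = HahnSeries.single (-(l i : ℤ)) (b i) + r ∧
        ∀ j : ℤ, j < 0 → r.coeff j = 0)
    (hx1m : ∀ i : Fin d, ∃ r : LaurentSeries F,
      x 1 (-(Pi.single i 1)) = HahnSeries.single (-(k i : ℤ)) (a i) + r ∧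
        ∀ j : ℤ, j < 0 → r.coeff j = 0)
    (hrec : x 2 0 + x 0 0 =
      ∑ i, (HahnSeries.C (a i) / (x 1 (Pi.single i 1)) ^ (k i) +
            HahnSeries.C (b i) / (x 1 (-(Pi.single i 1))) ^ (l i))) :
    ∀ j : ℤ, (∀ i : Fin d, j < (k i : ℤ) * (l i : ℤ)) →
      (x 2 0 + HahnSeries.single (1 : ℤ) (1 : F)).coeff j = 0 := by
  intro j hj
  rw [← hx00, hrec]
  have hsum : ∀ f : Fin d → LaurentSeries F,
      (∑ i, f i).coeff j = ∑ i, (f i).coeff j := fun f =>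
    map_sum (coeffHom j) f Finset.univ
  rw [hsum]
  refine Finset.sum_eq_zero fun i _ => ?_
  obtain ⟨r1, hr1, hr1'⟩ := hx1p i
  obtain ⟨r2, hr2, hr2'⟩ := hx1m i
  have h1 := key_term (hb i) (hl i).2 (hk i).2 hr1 hr1' (a := a i) j (hj i)
  have h2 := key_term (ha i) (hk i).2 (hl i).2 hr2 hr2' (a := b i) j
    (by rw [mul_comm]; exact hj i)
  simp only [coeffHom, AddMonoidHom.coe_mk, ZeroHom.coe_mk, HahnSeries.coeff_add, h1, h2,
    add_zero]
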